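/- Let r ≥ 2 be an integer, G a graph, H a K_{1,r}-saturated subgraph of G, and let A = {v ∈ V(G) : deg_H(v) ≤ r−2}. Then every vertex of V(G)∖A has degree exactly r−1 in H, the induced subgraphs G[A] and H[A] have the same edge set, and consequently A is an (r−2)-independent set in G, so |A| ≤ α_{r−2}(G). -/

import Mathlib

/-- The star graph `K_{1,r}`: one center (vertex `0`) joined to `r` leaves. -/
def starGraph (r : ℕ) : SimpleGraph (Fin (r + 1)) where
  Adj u v := u ≠ v ∧ (u = 0 ∨ v = 0)
  symm := ⟨by intro u v h; exact ⟨h.1.symm, h.2.symm⟩⟩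
  loopless := ⟨by intro u h; exact h.1 rfl⟩

/-- `F` is contained in `G` as a subgraph, i.e. `G` has a copy of `F`. -/
def ContainsCopy {α β : Type*} (F : SimpleGraph α) (G : SimpleGraph β) : Prop :=
  ∃ f : F →g G, Function.Injective f

/-- `H` is an `F`-saturated subgraph of `G`: it is a spanning subgraph of `G` (same vertex
set, `H ≤ G`), it is `F`-free, and adding any edge of `G` missing from `H` creates a copy
of `F`. -/
def IsSatSubgraph {V α : Type*} (G : SimpleGraph V) (F : SimpleGraph α)
    (H : SimpleGraph V) : Prop :=
  H ≤ G ∧ ¬ ContainsCopy F H ∧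
    ∀ u v : V, G.Adj u v → ¬ H.Adj u v →
      ContainsCopy F (H ⊔ SimpleGraph.fromEdgeSet {s(u, v)})

/-- `sat(G, F)`: the minimum number of edges of an `F`-saturated subgraph of `G`. -/
noncomputable def satNum {V α : Type*} (G : SimpleGraph V) (F : SimpleGraph α) : ℕ :=
  sInf {m | ∃ H : SimpleGraph V, IsSatSubgraph G F H ∧ H.edgeSet.ncard = m}

/-- `S` is `k`-independent in `G`: the induced subgraph `G[S]` has maximum degree at
most `k`, i.e. every vertex of `S` has at most `k` neighbours inside `S`. -/
def IsKIndepSet {V : Type*} (G : SimpleGraph V) (k : ℕ) (S : Set V) : Prop :=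
  ∀ v ∈ S, (S ∩ G.neighborSet v).ncard ≤ k

/-- `α_k(G)`: the maximum cardinality of a `k`-independent set in `G`. -/
noncomputable def kIndepNum {V : Type*} (G : SimpleGraph V) (k : ℕ) : ℕ :=
  sSup {m | ∃ S : Set V, IsKIndepSet G k S ∧ S.ncard = m}

/-- `α(G)`: the independence number of `G`. -/
noncomputable def indepNum {V : Type*} (G : SimpleGraph V) : ℕ :=
  sSup {m | ∃ S : Set V, (∀ u ∈ S, ∀ v ∈ S, ¬ G.Adj u v) ∧ S.ncard = m}

/-- The probability, under the Erdős–Rényi random graph `𝔾(n, p)`, that the sampled graph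
lies in the set `A`; each labelled graph `G` on the vertex set `{1, …, n}` is sampled
with probability `p ^ e(G) * (1 - p) ^ (C(n,2) - e(G))`. -/
noncomputable def gnpProb (n : ℕ) (p : ℝ) (A : Set (SimpleGraph (Fin n))) : ℝ :=
  ∑ G : SimpleGraph (Fin n),
    A.indicator (fun G => p ^ G.edgeSet.ncard * (1 - p) ^ (n.choose 2 - G.edgeSet.ncard)) G

lemma star_copy_iff {V : Type*} [Fintype V] (r : ℕ) (H : SimpleGraph V) :
    ContainsCopy (starGraph r) H ↔ ∃ v, r ≤ (H.neighborSet v).ncard := by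
  constructor
  · rintro ⟨f, hf⟩
    refine ⟨f 0, ?_⟩
    have hsub : ∀ i : Fin r, f i.succ ∈ H.neighborSet (f 0) := by
      intro i
      exact f.map_adj (⟨(Fin.succ_ne_zero i).symm, Or.inl rfl⟩ : (starGraph r).Adj 0 i.succ)
    calc r = (Set.univ : Set (Fin r)).ncard := by simp [Set.ncard_univ]
    _ ≤ (H.neighborSet (f 0)).ncard :=
      Set.ncard_le_ncard_of_injOn (fun i => f i.succ) (fun i _ => hsub i)
        (fun a _ b _ h => Fin.succ_injective _ (hf h)) (Set.toFinite _)
  · rintro ⟨v, hv⟩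
    obtain ⟨t, hts, htr⟩ := Set.exists_subset_card_eq hv
    haveI : Fintype t := (Set.toFinite t).fintype
    have hcard : Fintype.card t = r := by
      rw [← Nat.card_coe_set_eq, Nat.card_eq_fintype_card] at htr
      exact htr
    let e : t ≃ Fin r := Fintype.equivFinOfCardEq hcard
    let g : Fin (r+1) → V := fun i => if h : i = 0 then v else (e.symm (i.pred h) : V)
    have hg0 : g 0 = v := by simp [g]
    have hgne : ∀ (i : Fin (r+1)) (h : i ≠ 0), g i = (e.symm (i.pred h) : V) := by
      intro i h; simp [g, h]
    have hmem : ∀ (i : Fin (r+1)) (h : i ≠ 0), g i ∈ H.neighborSet v := by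
      intro i h; rw [hgne i h]; exact hts (e.symm (i.pred h)).2
    refine ⟨⟨g, ?_⟩, ?_⟩
    · rintro i j ⟨hne, h0⟩
      rcases h0 with rfl | rfl
      · have hj : j ≠ 0 := fun h => hne h.symm
        have := hmem j hj
        rw [hg0]; exact this
      · have hi : i ≠ 0 := hne
        have := hmem i hi
        rw [hg0]; exact (this : H.Adj _ _).symm
    · intro i j hij
      change g i = g j at hij
      by_cases hi : i = 0
      · by_cases hj : j = 0
        · rw [hi, hj]
        · exfalso
          have := hmem j hj
          rw [← hij, hi, hg0] at this
          exact H.irrefl this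
      · by_cases hj : j = 0
        · exfalso
          have := hmem i hi
          rw [hij, hj, hg0] at this
          exact H.irrefl this
        · rw [hgne i hi, hgne j hj] at hij
          have := e.symm.injective (Subtype.val_injective hij)
          have hpred : i.pred hi = j.pred hj := this
          have : (i.pred hi).succ = (j.pred hj).succ := by rw [hpred]
          rwa [Fin.succ_pred, Fin.succ_pred] at this

/-- Let `r ≥ 2` be an integer, `G` a graph, `H` a `K_{1,r}`-saturated
subgraph of `G`, and `A = {v : deg_H(v) ≤ r-2}`. Then every vertex outside `A` has degree
exactly `r-1` in `H`, the induced subgraphs `G[A]` and `H[A]` have the same edges, and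
consequently `A` is an `(r-2)`-independent set in `G`, so `|A| ≤ α_{r-2}(G)`. -/
theorem sat_subgraph_structure {V : Type*} [Fintype V] (r : ℕ) (hr : 2 ≤ r)
    (G H : SimpleGraph V) (hH : IsSatSubgraph G (starGraph r) H)
    (A : Set V) (hA : A = {v : V | (H.neighborSet v).ncard ≤ r - 2}) :
    (∀ v ∉ A, (H.neighborSet v).ncard = r - 1) ∧
    (∀ u ∈ A, ∀ v ∈ A, (G.Adj u v ↔ H.Adj u v)) ∧
    IsKIndepSet G (r - 2) A ∧
    A.ncard ≤ kIndepNum G (r - 2) := by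
  obtain ⟨hle, hfree, hsat⟩ := hH
  have hdeg : ∀ v, (H.neighborSet v).ncard ≤ r - 1 := by
    intro v
    by_contra hc
    exact hfree ((star_copy_iff r H).mpr ⟨v, by omega⟩)
  have key : ∀ u v : V, G.Adj u v → ¬ H.Adj u v →
      r - 1 ≤ (H.neighborSet u).ncard ∨ r - 1 ≤ (H.neighborSet v).ncard := by
    intro u v hG hnH
    have huv : u ≠ v := hG.ne
    obtain ⟨w, hw⟩ := (star_copy_iff r _).mp (hsat u v hG hnH)
    have hadj : ∀ a b : V, (H ⊔ SimpleGraph.fromEdgeSet {s(u, v)}).Adj a b ↔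
        H.Adj a b ∨ ((a = u ∧ b = v) ∨ (a = v ∧ b = u)) := by
      intro a b
      simp only [SimpleGraph.sup_adj, SimpleGraph.fromEdgeSet_adj, Set.mem_singleton_iff,
        Sym2.eq_iff]
      constructor
      · rintro (h | ⟨h, -⟩)
        · exact Or.inl h
        · exact Or.inr h
      · rintro (h | h)
        · exact Or.inl h
        · refine Or.inr ⟨h, ?_⟩
          rcases h with ⟨rfl, rfl⟩ | ⟨rfl, rfl⟩
          · exact huv
          · exact huv.symm
    by_cases hwu : w = u
    · rw [hwu] at hw
      have hsub : (H ⊔ SimpleGraph.fromEdgeSet {s(u, v)}).neighborSet u ⊆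
          insert v (H.neighborSet u) := by
        intro x hx
        rcases (hadj u x).mp hx with h | ⟨-, rfl⟩ | ⟨h, -⟩
        · exact Set.mem_insert_of_mem _ h
        · exact Set.mem_insert _ _
        · exact absurd h huv
      have := Set.ncard_le_ncard hsub (Set.toFinite _)
      have := Set.ncard_insert_le v (H.neighborSet u)
      left; omega
    · by_cases hwv : w = v
      · rw [hwv] at hw
        have hsub : (H ⊔ SimpleGraph.fromEdgeSet {s(u, v)}).neighborSet v ⊆
            insert u (H.neighborSet v) := by
          intro x hx
          rcases (hadj v x).mp hx with h | ⟨h, -⟩ | ⟨-, rfl⟩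
          · exact Set.mem_insert_of_mem _ h
          · exact absurd h huv.symm
          · exact Set.mem_insert _ _
        have := Set.ncard_le_ncard hsub (Set.toFinite _)
        have := Set.ncard_insert_le u (H.neighborSet v)
        right; omega
      · exfalso
        have hsub : (H ⊔ SimpleGraph.fromEdgeSet {s(u, v)}).neighborSet w ⊆
            H.neighborSet w := by
          intro x hx
          rcases (hadj w x).mp hx with h | ⟨h, -⟩ | ⟨h, -⟩
          · exact h
          · exact absurd h hwu
          · exact absurd h hwv
        have := Set.ncard_le_ncard hsub (Set.toFinite _)
        have := hdeg w
        omega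
  have part1 : ∀ v ∉ A, (H.neighborSet v).ncard = r - 1 := by
    intro v hv
    rw [hA] at hv
    simp only [Set.mem_setOf_eq, not_le] at hv
    have := hdeg v
    omega
  have part2 : ∀ u ∈ A, ∀ v ∈ A, (G.Adj u v ↔ H.Adj u v) := by
    intro u hu v hv
    rw [hA] at hu hv
    simp only [Set.mem_setOf_eq] at hu hv
    constructor
    · intro hG
      by_contra hnH
      rcases key u v hG hnH with h | h <;> omega
    · exact fun h => hle h
  have part3 : IsKIndepSet G (r - 2) A := by
    intro v hv
    have hsub : A ∩ G.neighborSet v ⊆ H.neighborSet v := by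
      rintro x ⟨hxA, hxG⟩
      exact (part2 v hv x hxA).mp hxG
    have h1 := Set.ncard_le_ncard hsub (Set.toFinite _)
    have h2 : (H.neighborSet v).ncard ≤ r - 2 := by rw [hA] at hv; exact hv
    omega
  refine ⟨part1, part2, part3, ?_⟩
  apply le_csSup
  · refine ⟨Nat.card V, ?_⟩
    rintro m ⟨S, -, rfl⟩
    calc S.ncard ≤ (Set.univ : Set V).ncard :=
      Set.ncard_le_ncard (Set.subset_univ S) (Set.toFinite _)
    _ = Nat.card V := Set.ncard_univ V
  · exact ⟨A, part3, rfl⟩
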